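/- Let $b=(b_1,\ldots,b_n)$ be a unit vector in $\mathbb{R}^n$ and let $A$ be a measurable subset of the hyperplane $b^{\perp}$ whose linear span has dimension $k \in \{1,\ldots,n-1\}$. Then for each $1 \le i \le n$, $|b_i| \cdot |A|_k \le |P_i(A)|_k$, where $P_i$ denotes the orthogonal projection onto $e_i^{\perp}$ and $|\cdot|_k$ denotes $k$-dimensional Hausdorff (Lebesgue) measure. -/

import Mathlib

open MeasureTheory Module Submodule Set
open scoped ENNReal RealInnerProductSpace

noncomputable def diagMap {m : ℕ} (d : Fin m → ℝ) :
    EuclideanSpace ℝ (Fin m) →ₗ[ℝ] EuclideanSpace ℝ (Fin m) where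
  toFun x := WithLp.toLp 2 (fun j => d j * x j)
  map_add' x y := by ext j; simp [mul_add]
  map_smul' c x := by ext j; simp [mul_left_comm]

lemma diagMap_det {m : ℕ} (d : Fin m → ℝ) : LinearMap.det (diagMap d) = ∏ j, d j := by
  classical
  let b := (EuclideanSpace.basisFun (Fin m) ℝ).toBasis
  rw [← LinearMap.det_toMatrix b]
  have h : LinearMap.toMatrix b b (diagMap d) = Matrix.diagonal d := by
    ext j l
    rw [LinearMap.toMatrix_apply, Matrix.diagonal]
    simp only [b, OrthonormalBasis.coe_toBasis_repr_apply, OrthonormalBasis.coe_toBasis,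
      EuclideanSpace.basisFun_apply, EuclideanSpace.basisFun_repr]
    show d j * (EuclideanSpace.single l (1:ℝ)) j = _
    rw [EuclideanSpace.single_apply]
    by_cases hjl : j = l <;> simp [hjl, Matrix.of_apply]
  rw [h, Matrix.det_diagonal]

-- Hausdorff measure μH[m] on EuclideanSpace ℝ (Fin m) is additive Haar
instance euclidean_hausdorff_haar (m : ℕ) :
    Measure.IsAddHaarMeasure (μH[(m : ℝ)] : Measure (EuclideanSpace ℝ (Fin m))) := by
  have h := MeasureTheory.isAddHaarMeasure_hausdorffMeasure
    (E := EuclideanSpace ℝ (Fin m))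
  simpa [finrank_euclideanSpace_fin] using h

lemma diag_image_measure {m : ℕ} (d : Fin m → ℝ) (T : Set (EuclideanSpace ℝ (Fin m))) :
    μH[(m : ℝ)] (diagMap d '' T) = ENNReal.ofReal |∏ j, d j| * μH[(m : ℝ)] T := by
  rw [Measure.addHaar_image_linearMap, diagMap_det]

set_option maxHeartbeats 1000000 in
theorem projection_measure_bound (n k : ℕ) (hk1 : 1 ≤ k) (hkn : k ≤ n - 1)
    (b : EuclideanSpace ℝ (Fin n)) (hb : ‖b‖ = 1)
    (A : Set (EuclideanSpace ℝ (Fin n))) (hA : MeasurableSet A)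
    (hAb : A ⊆ ((ℝ ∙ b)ᗮ : Set (EuclideanSpace ℝ (Fin n))))
    (hdim : Module.finrank ℝ (Submodule.span ℝ A) = k) (i : Fin n) :
    ENNReal.ofReal |b i| * μH[(k : ℝ)] A ≤
      μH[(k : ℝ)]
        ((fun x => ((orthogonalProjection ((ℝ ∙ (EuclideanSpace.single i (1 : ℝ)))ᗮ) x :
            EuclideanSpace ℝ (Fin n)))) '' A) := by
  classical
  by_cases hbi : b i = 0
  · simp [hbi]
  set e : EuclideanSpace ℝ (Fin n) := EuclideanSpace.single i (1:ℝ) with he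
  have hne : ‖e‖ = 1 := by simp [he]
  set P : EuclideanSpace ℝ (Fin n) → EuclideanSpace ℝ (Fin n) :=
    fun x => ((orthogonalProjection ((ℝ ∙ e)ᗮ) x : EuclideanSpace ℝ (Fin n))) with hPdef
  have hP : ∀ x, P x = x - ⟪e, x⟫ • e := by
    intro x
    rw [hPdef]
    show (ℝ ∙ e)ᗮ.starProjection x = _
    rw [starProjection_orthogonal_val, starProjection_unit_singleton ℝ hne]
  have heb : ⟪e, b⟫ = b i := by
    simp [he, EuclideanSpace.inner_single_left]
  have hbi1 : |b i| ≤ 1 := by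
    rw [← heb]
    calc |⟪e, b⟫| ≤ ‖e‖ * ‖b‖ := abs_real_inner_le_norm e b
    _ = 1 := by rw [hne, hb, mul_one]
  set K : Submodule ℝ (EuclideanSpace ℝ (Fin n)) := Submodule.span ℝ A with hK
  have hAK : A ⊆ (K : Set (EuclideanSpace ℝ (Fin n))) := Submodule.subset_span
  have hKb : K ≤ (ℝ ∙ b)ᗮ := Submodule.span_le.mpr hAb
  by_cases hKe : K ≤ (ℝ ∙ e)ᗮ
  · -- easy case : P is identity on A
    have himg : P '' A = A := by
      apply Set.image_congr (g := id) ?_ |>.trans (Set.image_id A)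
      intro a ha
      rw [hP]
      have : ⟪e, a⟫ = 0 :=
        Submodule.mem_orthogonal_singleton_iff_inner_right.mp (hKe (hAK ha))
      simp [this]
    rw [himg]
    calc ENNReal.ofReal |b i| * μH[(k : ℝ)] A ≤ 1 * μH[(k : ℝ)] A := by
          gcongr
          exact ENNReal.ofReal_le_one.mpr hbi1
    _ = μH[(k : ℝ)] A := one_mul _
  · -- main case
    obtain ⟨k', rfl⟩ : ∃ k', k = k' + 1 := ⟨k - 1, (Nat.succ_pred_eq_of_pos hk1).symm⟩
    rw [hK] at hdim
    -- the codimension-one subspace W₀ of K orthogonal to e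
    set φ : K →ₗ[ℝ] ℝ := (innerSL ℝ e).toLinearMap.comp K.subtype with hφ
    have hφ_apply : ∀ x : K, φ x = ⟪e, (x : EuclideanSpace ℝ (Fin n))⟫ := fun x => rfl
    obtain ⟨x, hxK, hx⟩ := SetLike.not_le_iff_exists.mp hKe
    have hxe : ⟪e, x⟫ ≠ 0 := fun h =>
      hx (Submodule.mem_orthogonal_singleton_iff_inner_right.mpr h)
    have hrange : LinearMap.range φ = ⊤ := by
      rw [LinearMap.range_eq_top]
      intro c
      refine ⟨(c / ⟪e, x⟫) • ⟨x, hxK⟩, ?_⟩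
      rw [LinearMapClass.map_smul, hφ_apply]
      simp only [smul_eq_mul]
      rw [div_mul_eq_mul_div, mul_div_assoc, div_self hxe, mul_one]
    clear hx hKe
    set W₀ : Submodule ℝ K := LinearMap.ker φ with hW₀def
    have hW₀ : finrank ℝ W₀ = k' := by
      have h1 := LinearMap.finrank_range_add_finrank_ker φ
      rw [hrange, finrank_top, Module.finrank_self, hdim] at h1
      rw [hW₀def]
      omega
    have hW₁ : finrank ℝ W₀ᗮ = 1 := by
      have h2 := Submodule.finrank_add_finrank_orthogonal (K := W₀)
      rw [hW₀, hdim] at h2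
      omega
    have hW₁ne : W₀ᗮ ≠ ⊥ := by
      intro h
      rw [h, finrank_bot] at hW₁
      omega
    obtain ⟨v, hvW, hv0⟩ := Submodule.exists_mem_ne_zero_of_ne_bot hW₁ne
    -- the unit vector u₀ of K orthogonal to W₀
    set u₀ : K := ‖v‖⁻¹ • v with hu₀def
    have hu₀ : ‖u₀‖ = 1 := norm_smul_inv_norm hv0
    have hu₀W : u₀ ∈ W₀ᗮ := Submodule.smul_mem _ _ hvW
    set u : EuclideanSpace ℝ (Fin n) := (u₀ : EuclideanSpace ℝ (Fin n)) with hudef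
    have hu : ‖u‖ = 1 := hu₀
    have hbu : ⟪b, u⟫ = 0 := by
      have : u ∈ (ℝ ∙ b)ᗮ := hKb u₀.2
      exact Submodule.mem_orthogonal_singleton_iff_inner_right.mp this
    set c : ℝ := ⟪e, u⟫ with hc
    have hcb : c ^ 2 ≤ 1 - (b i) ^ 2 := by
      have h1 : c = ⟪e - b i • b, u⟫ := by
        rw [inner_sub_left, real_inner_smul_left, hbu, mul_zero, sub_zero]
      have h2 : ‖e - b i • b‖ ^ 2 = 1 - (b i) ^ 2 := by
        rw [norm_sub_sq_real, real_inner_smul_right, heb, norm_smul, hne]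
        rw [hb]
        simp
        ring
      have h3 : |c| ≤ ‖e - b i • b‖ := by
        rw [h1]
        calc |⟪e - b i • b, u⟫| ≤ ‖e - b i • b‖ * ‖u‖ := abs_real_inner_le_norm _ _
        _ = ‖e - b i • b‖ := by simp [hu]
      calc c ^ 2 = |c| ^ 2 := (sq_abs c).symm
      _ ≤ ‖e - b i • b‖ ^ 2 := by gcongr <;> simp [abs_nonneg]
      _ = 1 - (b i) ^ 2 := h2
    have hc1 : c ^ 2 ≤ 1 := by nlinarith [sq_nonneg (b i)]
    set s : ℝ := Real.sqrt (1 - c ^ 2) with hs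
    have hs_nonneg : 0 ≤ s := Real.sqrt_nonneg _
    have hbs : |b i| ≤ s := by
      rw [hs, ← Real.sqrt_sq_eq_abs]
      exact Real.sqrt_le_sqrt (by nlinarith)
    have hs_pos : 0 < s := lt_of_lt_of_le (abs_pos.mpr hbi) hbs
    have hs_ne : s ≠ 0 := ne_of_gt hs_pos
    have hs_sq : s ^ 2 = 1 - c ^ 2 := Real.sq_sqrt (by nlinarith)
    have hPu_norm : ‖u - c • e‖ = s := by
      have h5 : ‖u - c • e‖ ^ 2 = 1 - c ^ 2 := by
        have h4 : ⟪u, c • e⟫ = c ^ 2 := by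
          rw [real_inner_smul_right, real_inner_comm e u]
          rw [hc]
          ring
        rw [norm_sub_sq_real, h4, norm_smul, hu, hne]
        simp
        ring
      rw [← Real.sqrt_sq (norm_nonneg (u - c • e)), h5]
    have hPu : P u = u - c • e := by rw [hP]
    -- the unit vector u' in the direction of P u
    set u' : EuclideanSpace ℝ (Fin n) := s⁻¹ • (u - c • e) with hu'def
    have hu' : ‖u'‖ = 1 := by
      rw [hu'def, norm_smul, hPu_norm, norm_inv, Real.norm_eq_abs, abs_of_pos hs_pos,
        inv_mul_cancel₀ hs_ne]
    have hPu' : P u = s • u' := by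
      rw [hPu, hu'def, smul_smul, mul_inv_cancel₀ hs_ne, one_smul]
    -- orthonormal bases
    set ob : OrthonormalBasis (Fin k') ℝ W₀ :=
      (stdOrthonormalBasis ℝ W₀).reindex (finCongr hW₀) with hob
    -- the adapted orthonormal basis of K
    set vb : Fin (k' + 1) → K := Fin.snoc (fun j => (ob j : K)) u₀ with hvb
    have hob_e : ∀ j, ⟪e, ((ob j : K) : EuclideanSpace ℝ (Fin n))⟫ = 0 := by
      intro j
      exact LinearMap.mem_ker.mp (ob j).2
    have hob_u₀ : ∀ j, ⟪((ob j : K) : EuclideanSpace ℝ (Fin n)), u⟫ = 0 := by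
      intro j
      have h6 : ⟪(ob j : K), u₀⟫ = 0 :=
        (Submodule.mem_orthogonal W₀ u₀).mp hu₀W _ (ob j).2
      exact h6
    have honv : Orthonormal ℝ vb := by
      rw [orthonormal_iff_ite]
      intro j l
      induction j using Fin.lastCases with
      | last =>
        induction l using Fin.lastCases with
        | last =>
          simp only [hvb, Fin.snoc_last, if_pos rfl]
          rw [real_inner_self_eq_norm_sq, hu₀]
          norm_num
        | cast l =>
          simp only [hvb, Fin.snoc_last, Fin.snoc_castSucc,
            if_neg (Fin.castSucc_lt_last l).ne']
          rw [real_inner_comm]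
          exact (Submodule.mem_orthogonal W₀ u₀).mp hu₀W _ (ob l).2
      | cast j =>
        induction l using Fin.lastCases with
        | last =>
          simp only [hvb, Fin.snoc_last, Fin.snoc_castSucc,
            if_neg (Fin.castSucc_lt_last j).ne]
          exact (Submodule.mem_orthogonal W₀ u₀).mp hu₀W _ (ob j).2
        | cast l =>
          simp only [hvb, Fin.snoc_castSucc]
          rw [← Submodule.coe_inner, orthonormal_iff_ite.mp ob.orthonormal]
          simp [Fin.castSucc_inj]
    -- B : orthonormal basis of K adapted to W₀
    have hcard : Fintype.card (Fin (k' + 1)) = finrank ℝ K := by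
      rw [hK, hdim, Fintype.card_fin]
    set bas : Basis (Fin (k' + 1)) ℝ K :=
      basisOfLinearIndependentOfCardEqFinrank honv.linearIndependent hcard with hbas
    have hbas_coe : ⇑bas = vb := coe_basisOfLinearIndependentOfCardEqFinrank _ _
    set B : OrthonormalBasis (Fin (k' + 1)) ℝ K :=
      bas.toOrthonormalBasis (by rwa [hbas_coe]) with hB
    have hB_coe : ⇑B = vb := by rw [hB, Basis.coe_toOrthonormalBasis, hbas_coe]
    -- the image orthonormal family w in the ambient space
    set w : Fin (k' + 1) → EuclideanSpace ℝ (Fin n) :=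
      Fin.snoc (fun j => ((ob j : K) : EuclideanSpace ℝ (Fin n))) u' with hw
    have hwu' : ∀ j : Fin k', ⟪((ob j : K) : EuclideanSpace ℝ (Fin n)), u'⟫ = 0 := by
      intro j
      rw [hu'def, real_inner_smul_right, inner_sub_right, real_inner_smul_right, hob_u₀ j]
      have h7 : ⟪((ob j : K) : EuclideanSpace ℝ (Fin n)), e⟫ = 0 := by
        rw [real_inner_comm]; exact hob_e j
      rw [h7]
      ring
    have honw : Orthonormal ℝ w := by
      rw [orthonormal_iff_ite]
      intro j l
      induction j using Fin.lastCases with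
      | last =>
        induction l using Fin.lastCases with
        | last =>
          simp only [hw, Fin.snoc_last, if_pos rfl]
          rw [real_inner_self_eq_norm_sq, hu']
          norm_num
        | cast l =>
          simp only [hw, Fin.snoc_last, Fin.snoc_castSucc,
            if_neg (Fin.castSucc_lt_last l).ne']
          rw [real_inner_comm]
          exact hwu' l
      | cast j =>
        induction l using Fin.lastCases with
        | last =>
          simp only [hw, Fin.snoc_last, Fin.snoc_castSucc,
            if_neg (Fin.castSucc_lt_last j).ne]
          exact hwu' j
        | cast l =>
          simp only [hw, Fin.snoc_castSucc]
          rw [← Submodule.coe_inner, ← Submodule.coe_inner,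
            orthonormal_iff_ite.mp ob.orthonormal]
          simp [Fin.castSucc_inj]
    -- the linear isometry G sending the standard basis to w
    set S : Submodule ℝ (EuclideanSpace ℝ (Fin n)) :=
      Submodule.span ℝ ((Finset.univ.image w : Finset (EuclideanSpace ℝ (Fin n))) :
        Set (EuclideanSpace ℝ (Fin n))) with hS
    set Bw0 := OrthonormalBasis.span honw Finset.univ with hBw0
    set eqv : ((Finset.univ : Finset (Fin (k'+1))) : Type) ≃ Fin (k'+1) :=
      Equiv.subtypeUnivEquiv (fun x => Finset.mem_univ x) with heqv
    set Bw := Bw0.reindex eqv with hBw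
    have hBw_apply : ∀ j, (Bw j : EuclideanSpace ℝ (Fin n)) = w j := by
      intro j
      rw [hBw, OrthonormalBasis.reindex_apply, hBw0, OrthonormalBasis.span_apply]
      rfl
    set G : EuclideanSpace ℝ (Fin (k'+1)) →ₗᵢ[ℝ] EuclideanSpace ℝ (Fin n) :=
      S.subtypeₗᵢ.comp Bw.repr.symm.toLinearIsometry with hG
    have hG_apply : ∀ y : EuclideanSpace ℝ (Fin (k'+1)), G y = ∑ j, y j • w j := by
      intro y
      have h8 := Bw.sum_repr_symm y
      rw [hG]
      simp only [LinearIsometry.coe_comp, Function.comp_apply,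
        LinearIsometryEquiv.coe_toLinearIsometry]
      rw [← h8]
      rw [show (S.subtypeₗᵢ : S → EuclideanSpace ℝ (Fin n)) = Subtype.val from rfl]
      rw [AddSubmonoidClass.coe_finset_sum]
      apply Finset.sum_congr rfl
      intro j _
      rw [SetLike.val_smul, hBw_apply]
    -- the diagonal scaling
    set d : Fin (k'+1) → ℝ := fun j => if j = Fin.last k' then s else 1 with hd
    have hdet : |∏ j, d j| = s := by
      rw [hd]
      simp only [Finset.prod_ite_eq', Finset.mem_univ, if_pos]
      exact abs_of_pos hs_pos
    -- the projection as a linear map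
    set Pl : EuclideanSpace ℝ (Fin n) →ₗ[ℝ] EuclideanSpace ℝ (Fin n) :=
      ((ℝ ∙ e)ᗮ.subtype).comp (orthogonalProjection (ℝ ∙ e)ᗮ).toLinearMap with hPl
    have hPl_eq : ∀ z, Pl z = P z := fun _ => rfl
    -- key identity
    have hkey : ∀ a (ha : a ∈ A), P a = G (diagMap d (B.repr ⟨a, hAK ha⟩)) := by
      intro a ha
      set xa := B.repr ⟨a, hAK ha⟩ with hxa
      have hcoe_sum : a = ∑ j, xa j • ((B j : K) : EuclideanSpace ℝ (Fin n)) := by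
        have h9 := B.sum_repr ⟨a, hAK ha⟩
        calc a = ((⟨a, hAK ha⟩ : K) : EuclideanSpace ℝ (Fin n)) := rfl
        _ = ((∑ j, xa j • B j : K) : EuclideanSpace ℝ (Fin n)) := by rw [h9]
        _ = ∑ j, xa j • ((B j : K) : EuclideanSpace ℝ (Fin n)) := by
            rw [AddSubmonoidClass.coe_finset_sum]
            apply Finset.sum_congr rfl
            intro j _
            rw [SetLike.val_smul]
      have hPa : P a = ∑ j, xa j • Pl ((B j : K) : EuclideanSpace ℝ (Fin n)) := by
        rw [← hPl_eq, hcoe_sum, map_sum]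
        apply Finset.sum_congr rfl
        intro j _
        rw [LinearMap.map_smul]
      have hG2 : G (diagMap d xa) = ∑ j, (d j * xa j) • w j := by
        rw [hG_apply]
        rfl
      rw [hPa, hG2, Fin.sum_univ_castSucc, Fin.sum_univ_castSucc]
      congr 1
      · apply Finset.sum_congr rfl
        intro j _
        have hBj : (B j.castSucc : K) = (ob j : K) := by
          rw [hB_coe, hvb, Fin.snoc_castSucc]
        have hmem : ((ob j : K) : EuclideanSpace ℝ (Fin n)) ∈ (ℝ ∙ e)ᗮ :=
          Submodule.mem_orthogonal_singleton_iff_inner_right.mpr (hob_e j)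
        have hfix : Pl ((ob j : K) : EuclideanSpace ℝ (Fin n)) =
            ((ob j : K) : EuclideanSpace ℝ (Fin n)) := by
          rw [hPl_eq, hPdef]
          exact starProjection_eq_self_iff.mpr hmem
        rw [hBj, hfix, hw, Fin.snoc_castSucc, hd]
        simp [(Fin.castSucc_lt_last j).ne]
      · have hBlast : (B (Fin.last k') : K) = u₀ := by
          rw [hB_coe, hvb, Fin.snoc_last]
        have hdlast : d (Fin.last k') = s := by rw [hd]; simp
        rw [hBlast, hdlast]
        rw [show ((u₀ : K) : EuclideanSpace ℝ (Fin n)) = u from rfl]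
        rw [hPl_eq, hPu', hw, Fin.snoc_last, smul_smul]
        ring_nf
    -- express the two measures
    set At : Set K := (Subtype.val) ⁻¹' A with hAt
    have hval : Subtype.val '' At = A := by
      rw [hAt, Set.image_preimage_eq_inter_range, Subtype.range_coe]
      exact Set.inter_eq_self_of_subset_left hAK
    set T : Set (EuclideanSpace ℝ (Fin (k'+1))) := ⇑B.repr '' At with hT
    have hexp : (0:ℝ) ≤ ((k' + 1 : ℕ) : ℝ) := by positivity
    have hμA : μH[((k' + 1 : ℕ) : ℝ)] A = μH[((k' + 1 : ℕ) : ℝ)] T := by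
      conv_lhs => rw [← hval]
      rw [show (Subtype.val : K → EuclideanSpace ℝ (Fin n)) = ⇑K.subtypeₗᵢ from rfl]
      rw [K.subtypeₗᵢ.isometry.hausdorffMeasure_image (Or.inl hexp)]
      rw [hT, B.repr.isometry.hausdorffMeasure_image (Or.inl hexp)]
    have himg2 : P '' A = ⇑G '' (diagMap d '' T) := by
      conv_lhs => rw [← hval]
      rw [hT, Set.image_image, Set.image_image, Set.image_image]
      apply Set.image_congr
      intro a ha
      have h10 := hkey (a : EuclideanSpace ℝ (Fin n)) ha
      rw [show (⟨(a : EuclideanSpace ℝ (Fin n)), hAK ha⟩ : K) = a from rfl] at h10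
      exact h10
    have hμP : μH[((k' + 1 : ℕ) : ℝ)] (P '' A) =
        ENNReal.ofReal s * μH[((k' + 1 : ℕ) : ℝ)] T := by
      rw [himg2]
      rw [G.isometry.hausdorffMeasure_image (Or.inl hexp)]
      rw [diag_image_measure, hdet]
    calc ENNReal.ofReal |b i| * μH[((k' + 1 : ℕ) : ℝ)] A
        = ENNReal.ofReal |b i| * μH[((k' + 1 : ℕ) : ℝ)] T := by rw [hμA]
    _ ≤ ENNReal.ofReal s * μH[((k' + 1 : ℕ) : ℝ)] T :=
        mul_le_mul_left (ENNReal.ofReal_le_ofReal hbs) _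
    _ = μH[((k' + 1 : ℕ) : ℝ)] (P '' A) := hμP.symm
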